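/- Let L be a Lie superalgebra and r ∈ Im(1⊗1−τ) ⊆ L⊗L an even element. Then for all x ∈ L: (1⊗1⊗1 + ξ + ξ²)·(1⊗Δ_r)·Δ_r(x) = x∗c(r), where c(r) = [r¹²,r¹³] + [r¹²,r²³] + [r¹³,r²³]. In particular, (L, [·,·], Δ_r) is a Lie superbialgebra if and only if x∗c(r)=0 for all x ∈ L. -/
import Mathlib


open TensorProduct

/-- The sign `(-1)^a` of a parity. -/
def psgn (a : ZMod 2) : ℂ := if a = 1 then -1 else 1

/-- The sign `(-1)^{ab}` for parities `a, b`. -/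
def sg (a b : ZMod 2) : ℂ := if a = 1 ∧ b = 1 then -1 else 1

/-- A Lie superalgebra structure on a complex vector space `L`. The
`ℤ₂`-grading is encoded by the involution `ω` acting by `(-1)^{[x]}` on
homogeneous `x`; the bracket is super skew-symmetric and satisfies the super
Jacobi identity on homogeneous elements. -/
structure SuperLie (L : Type*) [AddCommGroup L] [Module ℂ L] where
  br : L →ₗ[ℂ] L →ₗ[ℂ] L
  ω : L →ₗ[ℂ] L
  ω_ω : ∀ x, ω (ω x) = x
  ω_br : ∀ x y, ω (br x y) = br (ω x) (ω y)
  skew : ∀ (a b : ZMod 2) (x y : L), ω x = psgn a • x → ω y = psgn b • y →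
    br x y = -(sg a b) • br y x
  jacobi : ∀ (a b : ZMod 2) (x y z : L), ω x = psgn a • x → ω y = psgn b • y →
    br x (br y z) = br (br x y) z + sg a b • br y (br x z)

namespace SuperLie

variable {L : Type*} [AddCommGroup L] [Module ℂ L]

/-- `x` is homogeneous of parity `a`. -/
def IsHg (S : SuperLie L) (a : ZMod 2) (x : L) : Prop := S.ω x = psgn a • x

/-- Multiplication by `(-1)^{a·[·]}`. -/
noncomputable def tw (S : SuperLie L) (a : ZMod 2) : L →ₗ[ℂ] L :=
  if a = 0 then LinearMap.id else S.ω

/-- The adjoint diagonal action of a homogeneous `x` of parity `a` on `L ⊗ L`: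
`x ∗ (u ⊗ v) = [x,u] ⊗ v + (-1)^{a[u]} u ⊗ [x,v]`. -/
noncomputable def star2 (S : SuperLie L) (a : ZMod 2) (x : L) :
    L ⊗[ℂ] L →ₗ[ℂ] L ⊗[ℂ] L :=
  TensorProduct.map (S.br x) LinearMap.id + TensorProduct.map (S.tw a) (S.br x)

/-- The super-twist `τ(x ⊗ y) = (-1)^{[x][y]} y ⊗ x`. -/
noncomputable def tauT (S : SuperLie L) : L ⊗[ℂ] L →ₗ[ℂ] L ⊗[ℂ] L :=
  (TensorProduct.comm ℂ L L).toLinearMap ∘ₗ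
    (LinearMap.id - (1/2 : ℂ) •
      TensorProduct.map (LinearMap.id - S.ω) (LinearMap.id - S.ω))

end SuperLie

namespace SuperLie

variable {L : Type*} [AddCommGroup L] [Module ℂ L]

/-- The super-cyclic map `ξ = (1 ⊗ τ)(τ ⊗ 1)` on `L ⊗ L ⊗ L`. -/
noncomputable def xiT (S : SuperLie L) :
    L ⊗[ℂ] (L ⊗[ℂ] L) →ₗ[ℂ] L ⊗[ℂ] (L ⊗[ℂ] L) :=
  TensorProduct.map LinearMap.id S.tauT ∘ₗ (TensorProduct.assoc ℂ L L L).toLinearMap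
    ∘ₗ TensorProduct.map S.tauT LinearMap.id
    ∘ₗ (TensorProduct.assoc ℂ L L L).symm.toLinearMap

/-- The adjoint diagonal action of a homogeneous `x` of parity `a` on `L⊗L⊗L`. -/
noncomputable def star3 (S : SuperLie L) (a : ZMod 2) (x : L) :
    L ⊗[ℂ] (L ⊗[ℂ] L) →ₗ[ℂ] L ⊗[ℂ] (L ⊗[ℂ] L) :=
  TensorProduct.map (S.br x) LinearMap.id + TensorProduct.map (S.tw a) (S.star2 a x)

/-- The coboundary `Δ_r(x) = (-1)^{[r][x]} x ∗ r` for the even element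
`r = Σᵢ aᵢ ⊗ bᵢ` (with `aᵢ, bᵢ` homogeneous, `[aᵢ] = pa i = [bᵢ]`). -/
noncomputable def Dr (S : SuperLie L) {N : ℕ} (a b : Fin N → L)
    (pa : Fin N → ZMod 2) : L →ₗ[ℂ] L ⊗[ℂ] L :=
  ∑ i, ((TensorProduct.mk ℂ L L).flip (b i) ∘ₗ S.br.flip (a i)
    + TensorProduct.mk ℂ L L (a i) ∘ₗ S.br.flip (b i) ∘ₗ S.tw (pa i))

/-- `c(r) = [r¹²,r¹³] + [r¹²,r²³] + [r¹³,r²³]` for `r = Σᵢ aᵢ ⊗ bᵢ`. -/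
noncomputable def crE (S : SuperLie L) {N : ℕ} (a b : Fin N → L)
    (pa : Fin N → ZMod 2) : L ⊗[ℂ] (L ⊗[ℂ] L) :=
  ∑ i, ∑ j,
    (sg (pa j) (pa i) • S.br (a i) (a j) ⊗ₜ[ℂ] (b i ⊗ₜ[ℂ] b j)
      + a i ⊗ₜ[ℂ] (S.br (b i) (a j) ⊗ₜ[ℂ] b j)
      + sg (pa j) (pa i) • a i ⊗ₜ[ℂ] (a j ⊗ₜ[ℂ] S.br (b i) (b j)))

/-- `1⊗1⊗1 + ξ + ξ²` on `L ⊗ L ⊗ L`. -/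
noncomputable def oneXi (S : SuperLie L) :
    L ⊗[ℂ] (L ⊗[ℂ] L) →ₗ[ℂ] L ⊗[ℂ] (L ⊗[ℂ] L) :=
  LinearMap.id + S.xiT + S.xiT ∘ₗ S.xiT

-- ===== basic lemmas =====
section Lemmas
set_option linter.dupNamespace false

lemma zmod2_cases (c : ZMod 2) : c = 0 ∨ c = 1 := by revert c; decide

@[simp] lemma psgn_zero : psgn 0 = 1 := by norm_num [psgn]
@[simp] lemma psgn_one : psgn 1 = -1 := by norm_num [psgn]

variable {S : SuperLie L}

lemma IsHg.brr {α β : ZMod 2} {x y : L} (hx : S.IsHg α x) (hy : S.IsHg β y) :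
    S.IsHg (α + β) (S.br x y) := by
  unfold IsHg at *
  rw [S.ω_br, hx, hy, map_smul, map_smul, LinearMap.smul_apply, smul_smul]
  rcases zmod2_cases α with h | h <;> rcases zmod2_cases β with h' | h' <;>
    subst h <;> subst h' <;>
    simp [psgn, show ((1:ZMod 2)+1) = 0 by decide, show ((2:ZMod 2)) = 0 by decide,
      show ¬((2:ZMod 2) = 1) by decide]

lemma IsHg.csmul {α : ZMod 2} {x : L} (c : ℂ) (hx : S.IsHg α x) :
    S.IsHg α (c • x) := by
  unfold IsHg at *
  rw [map_smul, hx, smul_comm]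

lemma tw_hg {α β : ZMod 2} {u : L} (hu : S.IsHg β u) :
    S.tw α u = sg α β • u := by
  unfold SuperLie.tw
  rcases zmod2_cases α with h | h <;> subst h
  · simp [sg]
  · rw [if_neg (by decide)]
    rw [hu]
    rcases zmod2_cases β with h' | h' <;> subst h' <;> norm_num [sg, psgn]

lemma tauT_tmul {α β : ZMod 2} {u v : L} (hu : S.IsHg α u) (hv : S.IsHg β v) :
    S.tauT (u ⊗ₜ[ℂ] v) = sg α β • (v ⊗ₜ[ℂ] u) := by
  unfold IsHg at hu hv
  unfold SuperLie.tauT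
  simp only [LinearMap.comp_apply, LinearMap.sub_apply, LinearMap.smul_apply,
    TensorProduct.map_tmul, LinearMap.id_apply, hu, hv]
  have h1 : (u - psgn α • u) ⊗ₜ[ℂ] (v - psgn β • v)
      = ((1 - psgn α) * (1 - psgn β)) • (u ⊗ₜ[ℂ] v) := by
    simp only [TensorProduct.sub_tmul, TensorProduct.tmul_sub,
      TensorProduct.smul_tmul, TensorProduct.tmul_smul, smul_smul]
    module
  rw [h1, map_sub, map_smul, map_smul]
  simp only [LinearEquiv.coe_coe, TensorProduct.comm_tmul]
  rcases zmod2_cases α with h | h <;> rcases zmod2_cases β with h' | h' <;>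
    subst h <;> subst h'
  all_goals simp only [sg, psgn]
  all_goals norm_num
  all_goals module

lemma exists_decomp (S : SuperLie L) (x : L) :
    ∃ x0 x1 : L, S.IsHg 0 x0 ∧ S.IsHg 1 x1 ∧ x = x0 + x1 := by
  refine ⟨(2⁻¹ : ℂ) • (x + S.ω x), (2⁻¹ : ℂ) • (x - S.ω x), ?_, ?_, ?_⟩
  · unfold IsHg
    rw [map_smul, map_add, S.ω_ω, psgn_zero]
    module
  · unfold IsHg
    rw [map_smul, map_sub, S.ω_ω, psgn_one]
    module
  · module

lemma hg_ext {M : Type*} [AddCommGroup M] [Module ℂ M] {f g : L →ₗ[ℂ] M}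
    (h : ∀ (α : ZMod 2) (x : L), S.IsHg α x → f x = g x) : f = g := by
  ext x
  obtain ⟨x0, x1, h0, h1, rfl⟩ := S.exists_decomp x
  rw [map_add, map_add, h 0 x0 h0, h 1 x1 h1]

lemma tauT_tauT (t : L ⊗[ℂ] L) : S.tauT (S.tauT t) = t := by
  have key : ∀ (α β : ZMod 2) (u v : L), S.IsHg α u → S.IsHg β v →
      S.tauT (S.tauT (u ⊗ₜ[ℂ] v)) = u ⊗ₜ[ℂ] v := by
    intro α β u v hu hv
    rw [tauT_tmul hu hv, map_smul, tauT_tmul hv hu, smul_smul]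
    rcases zmod2_cases α with h | h <;> rcases zmod2_cases β with h' | h' <;>
      subst h <;> subst h' <;> norm_num [sg]
  induction t with
  | zero => simp
  | tmul u v =>
    obtain ⟨u0, u1, hu0, hu1, rfl⟩ := S.exists_decomp u
    obtain ⟨v0, v1, hv0, hv1, rfl⟩ := S.exists_decomp v
    rw [TensorProduct.add_tmul, TensorProduct.tmul_add, TensorProduct.tmul_add]
    simp only [map_add]
    rw [key 0 0 _ _ hu0 hv0, key 0 1 _ _ hu0 hv1, key 1 0 _ _ hu1 hv0,
      key 1 1 _ _ hu1 hv1]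
  | add s t hs ht => simp only [map_add, hs, ht]

end Lemmas

-- ===== evaluation lemmas =====
section Eval
variable {S : SuperLie L}

lemma Dr_apply {σ : ZMod 2} {y : L} (hy : S.IsHg σ y) {N : ℕ} (a b : Fin N → L)
    (pa : Fin N → ZMod 2) :
    S.Dr a b pa y
      = ∑ i, (S.br y (a i) ⊗ₜ[ℂ] b i + sg (pa i) σ • a i ⊗ₜ[ℂ] S.br y (b i)) := by
  unfold SuperLie.Dr
  rw [LinearMap.sum_apply]
  refine Finset.sum_congr rfl fun i _ => ?_
  simp only [LinearMap.add_apply, LinearMap.comp_apply, LinearMap.flip_apply,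
    TensorProduct.mk_apply, tw_hg hy, map_smul, TensorProduct.tmul_smul]

lemma star2_tmul (α : ZMod 2) (x u v : L) :
    S.star2 α x (u ⊗ₜ[ℂ] v)
      = S.br x u ⊗ₜ[ℂ] v + S.tw α u ⊗ₜ[ℂ] S.br x v := by
  simp [SuperLie.star2]

lemma star2_tmul_hg {α β : ZMod 2} (x : L) {u : L} (v : L) (hu : S.IsHg β u) :
    S.star2 α x (u ⊗ₜ[ℂ] v)
      = S.br x u ⊗ₜ[ℂ] v + sg α β • u ⊗ₜ[ℂ] S.br x v := by
  rw [star2_tmul, tw_hg hu, TensorProduct.smul_tmul']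

lemma star3_tmul_hg {α β γ : ZMod 2} (x : L) {u v : L} (w : L)
    (hu : S.IsHg β u) (hv : S.IsHg γ v) :
    S.star3 α x (u ⊗ₜ[ℂ] (v ⊗ₜ[ℂ] w))
      = S.br x u ⊗ₜ[ℂ] (v ⊗ₜ[ℂ] w) + sg α β • u ⊗ₜ[ℂ] (S.br x v ⊗ₜ[ℂ] w)
        + (sg α β * sg α γ) • u ⊗ₜ[ℂ] (v ⊗ₜ[ℂ] S.br x w) := by
  unfold SuperLie.star3
  simp only [LinearMap.add_apply, TensorProduct.map_tmul, LinearMap.id_apply]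
  rw [star2_tmul_hg x w hv, tw_hg hu]
  simp only [TensorProduct.tmul_add, ← TensorProduct.smul_tmul',
    TensorProduct.tmul_smul, smul_smul, add_assoc]
  rw [mul_comm (sg α γ) (sg α β)]

lemma xiT_tmul_hg {α β γ : ZMod 2} {u v w : L}
    (hu : S.IsHg α u) (hv : S.IsHg β v) (hw : S.IsHg γ w) :
    S.xiT (u ⊗ₜ[ℂ] (v ⊗ₜ[ℂ] w))
      = (sg α β * sg α γ) • v ⊗ₜ[ℂ] (w ⊗ₜ[ℂ] u) := by
  unfold SuperLie.xiT
  simp only [LinearMap.comp_apply, LinearEquiv.coe_coe,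
    TensorProduct.assoc_symm_tmul, TensorProduct.map_tmul, LinearMap.id_apply]
  rw [tauT_tmul hu hv]
  simp only [← TensorProduct.smul_tmul', map_smul, TensorProduct.assoc_tmul,
    TensorProduct.map_tmul, LinearMap.id_apply]
  rw [tauT_tmul hu hw, TensorProduct.tmul_smul, smul_smul]

lemma hskew {N : ℕ} {a b : Fin N → L}
    (hr : (∑ i, a i ⊗ₜ[ℂ] b i) ∈ LinearMap.range (LinearMap.id - S.tauT)) :
    S.tauT (∑ i, a i ⊗ₜ[ℂ] b i) = -∑ i, a i ⊗ₜ[ℂ] b i := by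
  obtain ⟨t, ht⟩ := hr
  rw [← ht]
  simp only [LinearMap.sub_apply, LinearMap.id_apply, map_sub, tauT_tauT]
  abel

lemma skewcancel {N : ℕ} {a b : Fin N → L} {pa : Fin N → ZMod 2}
    (ha : ∀ i, S.IsHg (pa i) (a i)) (hb : ∀ i, S.IsHg (pa i) (b i))
    (hsk : S.tauT (∑ i, a i ⊗ₜ[ℂ] b i) = -∑ i, a i ⊗ₜ[ℂ] b i)
    {M : Type*} [AddCommGroup M] [Module ℂ M] (Φ : L ⊗[ℂ] L →ₗ[ℂ] M) :
    ∑ i, (Φ (a i ⊗ₜ[ℂ] b i) + sg (pa i) (pa i) • Φ (b i ⊗ₜ[ℂ] a i)) = 0 := by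
  have h1 : ∀ i, sg (pa i) (pa i) • Φ (b i ⊗ₜ[ℂ] a i)
      = Φ (S.tauT (a i ⊗ₜ[ℂ] b i)) := by
    intro i
    rw [tauT_tmul (ha i) (hb i), map_smul]
  calc ∑ i, (Φ (a i ⊗ₜ[ℂ] b i) + sg (pa i) (pa i) • Φ (b i ⊗ₜ[ℂ] a i))
      = Φ (∑ i, a i ⊗ₜ[ℂ] b i) + Φ (S.tauT (∑ i, a i ⊗ₜ[ℂ] b i)) := by
        simp only [h1, Finset.sum_add_distrib, ← map_sum]
    _ = 0 := by rw [hsk, map_neg, add_neg_cancel]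

end Eval

-- ===== big expression defs =====

noncomputable def XII (S : SuperLie L) (σ p q : ZMod 2) (x u v w z : L) :
    L ⊗[ℂ] (L ⊗[ℂ] L) :=
  (S.br x u) ⊗ₜ[ℂ] ((S.br v w) ⊗ₜ[ℂ] z)
  + (sg (σ + p) (p + q) * sg (σ + p) q) • ((S.br v w) ⊗ₜ[ℂ] (z ⊗ₜ[ℂ] (S.br x u)))
  + (sg (σ + p) (p + q) * sg (σ + p) q * sg (p + q) q * sg (p + q) (σ + p)) • (z ⊗ₜ[ℂ] ((S.br x u) ⊗ₜ[ℂ] (S.br v w)))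
  + (sg q p) • ((S.br x u) ⊗ₜ[ℂ] (w ⊗ₜ[ℂ] (S.br v z)))
  + (sg q p * sg (σ + p) q * sg (σ + p) (p + q)) • (w ⊗ₜ[ℂ] ((S.br v z) ⊗ₜ[ℂ] (S.br x u)))
  + (sg q p * sg (σ + p) q * sg (σ + p) (p + q) * sg q (p + q) * sg q (σ + p)) • ((S.br v z) ⊗ₜ[ℂ] ((S.br x u) ⊗ₜ[ℂ] w))
  + (sg p σ) • (u ⊗ₜ[ℂ] ((S.br (S.br x v) w) ⊗ₜ[ℂ] z))
  + (sg p σ * sg p ((σ + p) + q) * sg p q) • ((S.br (S.br x v) w) ⊗ₜ[ℂ] (z ⊗ₜ[ℂ] u))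
  + (sg p σ * sg p ((σ + p) + q) * sg p q * sg ((σ + p) + q) q * sg ((σ + p) + q) p) • (z ⊗ₜ[ℂ] (u ⊗ₜ[ℂ] (S.br (S.br x v) w)))
  + (sg p σ * sg q (σ + p)) • (u ⊗ₜ[ℂ] (w ⊗ₜ[ℂ] (S.br (S.br x v) z)))
  + (sg p σ * sg q (σ + p) * sg p q * sg p ((σ + p) + q)) • (w ⊗ₜ[ℂ] ((S.br (S.br x v) z) ⊗ₜ[ℂ] u))
  + (sg p σ * sg q (σ + p) * sg p q * sg p ((σ + p) + q) * sg q ((σ + p) + q) * sg q p) • ((S.br (S.br x v) z) ⊗ₜ[ℂ] (u ⊗ₜ[ℂ] w))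

noncomputable def NINE (S : SuperLie L) (σ p q : ZMod 2) (x u v w z : L) :
    L ⊗[ℂ] (L ⊗[ℂ] L) :=
  (sg q p) • ((S.br x (S.br u w)) ⊗ₜ[ℂ] (v ⊗ₜ[ℂ] z))
  + (sg q p * sg σ (p + q)) • ((S.br u w) ⊗ₜ[ℂ] ((S.br x v) ⊗ₜ[ℂ] z))
  + (sg q p * sg σ (p + q) * sg σ p) • ((S.br u w) ⊗ₜ[ℂ] (v ⊗ₜ[ℂ] (S.br x z)))
  + (S.br x u) ⊗ₜ[ℂ] ((S.br v w) ⊗ₜ[ℂ] z)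
  + (sg σ p) • (u ⊗ₜ[ℂ] ((S.br x (S.br v w)) ⊗ₜ[ℂ] z))
  + (sg σ p * sg σ (p + q)) • (u ⊗ₜ[ℂ] ((S.br v w) ⊗ₜ[ℂ] (S.br x z)))
  + (sg q p) • ((S.br x u) ⊗ₜ[ℂ] (w ⊗ₜ[ℂ] (S.br v z)))
  + (sg q p * sg σ p) • (u ⊗ₜ[ℂ] ((S.br x w) ⊗ₜ[ℂ] (S.br v z)))
  + (sg q p * sg σ p * sg σ q) • (u ⊗ₜ[ℂ] (w ⊗ₜ[ℂ] (S.br x (S.br v z))))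

noncomputable def F1 (S : SuperLie L) (σ p q : ZMod 2) (x u v w z : L) :
    L ⊗[ℂ] (L ⊗[ℂ] L) :=
  (-(sg p p * sg σ p * sg q p)) • ((S.br w v) ⊗ₜ[ℂ] (z ⊗ₜ[ℂ] (S.br x u)))
  + (-(sg σ q * sg p q)) • ((S.br u w) ⊗ₜ[ℂ] (v ⊗ₜ[ℂ] (S.br x z)))

noncomputable def F2 (S : SuperLie L) (σ p q : ZMod 2) (x u v w z : L) :
    L ⊗[ℂ] (L ⊗[ℂ] L) :=
  (-(sg q q * sg σ q * sg p q)) • (z ⊗ₜ[ℂ] ((S.br x u) ⊗ₜ[ℂ] (S.br w v)))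
  + (-(sg σ p * sg p q)) • (u ⊗ₜ[ℂ] ((S.br x w) ⊗ₜ[ℂ] (S.br v z)))

noncomputable def F3 (S : SuperLie L) (σ p q : ZMod 2) (x u v w z : L) :
    L ⊗[ℂ] (L ⊗[ℂ] L) :=
  (sg p p * sg σ p * sg q p) • (w ⊗ₜ[ℂ] ((S.br v z) ⊗ₜ[ℂ] (S.br x u)))
  + (sg σ q * sg p q) • (u ⊗ₜ[ℂ] ((S.br w v) ⊗ₜ[ℂ] (S.br x z)))

noncomputable def F4 (S : SuperLie L) (σ p q : ZMod 2) (x u v w z : L) :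
    L ⊗[ℂ] (L ⊗[ℂ] L) :=
  (sg p p) • ((S.br (S.br x v) w) ⊗ₜ[ℂ] (z ⊗ₜ[ℂ] u))
  + (S.br (S.br x w) u) ⊗ₜ[ℂ] (v ⊗ₜ[ℂ] z)

noncomputable def F5 (S : SuperLie L) (σ p q : ZMod 2) (x u v w z : L) :
    L ⊗[ℂ] (L ⊗[ℂ] L) :=
  (sg q q * sg σ p * sg σ q) • (z ⊗ₜ[ℂ] (u ⊗ₜ[ℂ] (S.br (S.br x v) w)))
  + (sg σ p * sg σ q) • (u ⊗ₜ[ℂ] (w ⊗ₜ[ℂ] (S.br (S.br x z) v)))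

noncomputable def F6 (S : SuperLie L) (σ p q : ZMod 2) (x u v w z : L) :
    L ⊗[ℂ] (L ⊗[ℂ] L) :=
  (sg p p * sg σ q * sg p q) • (w ⊗ₜ[ℂ] ((S.br (S.br x v) z) ⊗ₜ[ℂ] u))
  + (sg σ p * sg p q) • (u ⊗ₜ[ℂ] ((S.br (S.br x w) v) ⊗ₜ[ℂ] z))

noncomputable def F7 (S : SuperLie L) (σ p q : ZMod 2) (x u v w z : L) :
    L ⊗[ℂ] (L ⊗[ℂ] L) :=
  (sg p p * sg q q * sg σ p * sg σ q * sg p q) • ((S.br v z) ⊗ₜ[ℂ] ((S.br x u) ⊗ₜ[ℂ] w))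
  + (-(sg σ p * sg σ q * sg p q)) • ((S.br u w) ⊗ₜ[ℂ] ((S.br x v) ⊗ₜ[ℂ] z))

noncomputable def F8 (S : SuperLie L) (σ p q : ZMod 2) (x u v w z : L) :
    L ⊗[ℂ] (L ⊗[ℂ] L) :=
  (sg p p * sg q q * sg p q) • ((S.br (S.br x v) z) ⊗ₜ[ℂ] (u ⊗ₜ[ℂ] w))
  + (-(sg p q)) • ((S.br (S.br x u) w) ⊗ₜ[ℂ] (v ⊗ₜ[ℂ] z))

noncomputable def SIXTEEN (S : SuperLie L) (σ p q : ZMod 2) (x u v w z : L) :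
    L ⊗[ℂ] (L ⊗[ℂ] L) :=
  S.F1 σ p q x u v w z
  + S.F2 σ p q x u v w z
  + S.F3 σ p q x u v w z
  + S.F4 σ p q x u v w z
  + S.F5 σ p q x u v w z
  + S.F6 σ p q x u v w z
  + S.F7 σ p q x u v w z
  + S.F8 σ p q x u v w z

-- ===== sg simp lemmas =====
@[simp] lemma zmod_one_one : (1 : ZMod 2) + 1 = 0 := by decide
@[simp] lemma sg_zero_left (a : ZMod 2) : sg 0 a = 1 := by
  have h : ¬((0 : ZMod 2) = 1 ∧ a = 1) := by
    rintro ⟨h, -⟩; exact absurd h (by decide)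
  simp [sg, h]
@[simp] lemma sg_zero_right (a : ZMod 2) : sg a 0 = 1 := by
  have h : ¬(a = 1 ∧ (0 : ZMod 2) = 1) := by
    rintro ⟨-, h⟩; exact absurd h (by decide)
  simp [sg, h]
@[simp] lemma sg_one_one : sg 1 1 = -1 := by simp [sg]

section GLL
variable {S : SuperLie L}

lemma GLL {σ p q : ZMod 2} {x u v w z : L}
    (hx : S.IsHg σ x) (hu : S.IsHg p u) (hv : S.IsHg p v)
    (hw : S.IsHg q w) (hz : S.IsHg q z) :
    S.XII σ p q x u v w z = S.NINE σ p q x u v w z + S.SIXTEEN σ p q x u v w z := by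
  unfold SuperLie.XII SuperLie.NINE SuperLie.SIXTEEN SuperLie.F1 SuperLie.F2
    SuperLie.F3 SuperLie.F4 SuperLie.F5 SuperLie.F6 SuperLie.F7 SuperLie.F8
  rw [S.jacobi σ p x u w hx hu, S.jacobi σ p x v w hx hv, S.jacobi σ p x v z hx hv,
      S.skew q p w v hw hv,
      S.skew p (σ + q) u (S.br x w) hu (hx.brr hw),
      S.skew p (σ + q) v (S.br x w) hv (hx.brr hw),
      S.skew p (σ + q) v (S.br x z) hv (hx.brr hz)]
  simp only [TensorProduct.add_tmul, TensorProduct.tmul_add, TensorProduct.neg_tmul,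
    TensorProduct.tmul_neg, ← TensorProduct.smul_tmul', TensorProduct.tmul_smul,
    smul_smul, smul_add, smul_neg, neg_smul, neg_neg]
  rcases zmod2_cases σ with h | h <;> subst h <;>
    rcases zmod2_cases p with h | h <;> subst h <;>
    rcases zmod2_cases q with h | h <;> subst h <;>
    simp only [zmod_one_one, zero_add, add_zero, sg_zero_left, sg_zero_right,
      sg_one_one] <;>
    module

end GLL

-- ===== FOUR and expansion lemmas =====

noncomputable def FOUR (S : SuperLie L) (σ p q : ZMod 2) (x u v w z : L) :
    L ⊗[ℂ] (L ⊗[ℂ] L) :=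
  (S.br x u) ⊗ₜ[ℂ] ((S.br v w) ⊗ₜ[ℂ] z)
  + (sg q p) • ((S.br x u) ⊗ₜ[ℂ] (w ⊗ₜ[ℂ] (S.br v z)))
  + (sg p σ) • (u ⊗ₜ[ℂ] ((S.br (S.br x v) w) ⊗ₜ[ℂ] z))
  + (sg p σ * sg q (σ + p)) • (u ⊗ₜ[ℂ] (w ⊗ₜ[ℂ] (S.br (S.br x v) z)))

section Expand
variable {S : SuperLie L}

lemma oneXi_four {σ p q : ZMod 2} {x u v w z : L}
    (hx : S.IsHg σ x) (hu : S.IsHg p u) (hv : S.IsHg p v)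
    (hw : S.IsHg q w) (hz : S.IsHg q z) :
    S.oneXi (S.FOUR σ p q x u v w z) = S.XII σ p q x u v w z := by
  have hxu := hx.brr hu
  have hvw := hv.brr hw
  have hvz := hv.brr hz
  have hxvw := (hx.brr hv).brr hw
  have hxvz := (hx.brr hv).brr hz
  unfold SuperLie.oneXi SuperLie.FOUR SuperLie.XII
  simp only [LinearMap.add_apply, LinearMap.id_apply, LinearMap.comp_apply,
    map_add, map_smul]
  rw [xiT_tmul_hg hxu hvw hz, xiT_tmul_hg hxu hw hvz, xiT_tmul_hg hu hxvw hz,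
    xiT_tmul_hg hu hw hxvz]
  simp only [map_smul]
  rw [xiT_tmul_hg hvw hz hxu, xiT_tmul_hg hw hvz hxu, xiT_tmul_hg hxvw hz hu,
    xiT_tmul_hg hw hxvz hu]
  simp only [smul_smul]
  module

lemma expand_LHS {σ : ZMod 2} {x : L} (hx : S.IsHg σ x) {N : ℕ}
    (a b : Fin N → L) (pa : Fin N → ZMod 2)
    (ha : ∀ i, S.IsHg (pa i) (a i)) (hb : ∀ i, S.IsHg (pa i) (b i)) :
    TensorProduct.map LinearMap.id (S.Dr a b pa) (S.Dr a b pa x)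
      = ∑ i, ∑ j, S.FOUR σ (pa i) (pa j) x (a i) (b i) (a j) (b j) := by
  rw [Dr_apply hx, map_sum]
  refine Finset.sum_congr rfl fun i _ => ?_
  rw [map_add, map_smul, TensorProduct.map_tmul, TensorProduct.map_tmul]
  simp only [LinearMap.id_apply]
  rw [Dr_apply (hb i) a b pa, Dr_apply (hx.brr (hb i)) a b pa]
  rw [TensorProduct.tmul_sum, TensorProduct.tmul_sum, Finset.smul_sum,
    ← Finset.sum_add_distrib]
  refine Finset.sum_congr rfl fun j _ => ?_
  unfold SuperLie.FOUR
  simp only [TensorProduct.tmul_add, TensorProduct.tmul_smul, smul_add, smul_smul]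
  module

lemma expand_RHS {σ : ZMod 2} {x : L} (hx : S.IsHg σ x) {N : ℕ}
    (a b : Fin N → L) (pa : Fin N → ZMod 2)
    (ha : ∀ i, S.IsHg (pa i) (a i)) (hb : ∀ i, S.IsHg (pa i) (b i)) :
    S.star3 σ x (S.crE a b pa)
      = ∑ i, ∑ j, S.NINE σ (pa i) (pa j) x (a i) (b i) (a j) (b j) := by
  unfold SuperLie.crE
  rw [map_sum]
  refine Finset.sum_congr rfl fun i _ => ?_
  rw [map_sum]
  refine Finset.sum_congr rfl fun j _ => ?_
  rw [map_add, map_add, map_smul, map_smul]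
  rw [star3_tmul_hg x _ ((ha i).brr (ha j)) (hb i),
    star3_tmul_hg x _ (ha i) ((hb i).brr (ha j)),
    star3_tmul_hg x _ (ha i) (ha j)]
  unfold SuperLie.NINE
  simp only [smul_add, smul_smul]
  module

end Expand

-- ===== pair cancellation lemmas =====
section SumF

lemma sumF1 {S : SuperLie L} {N : ℕ} {a b : Fin N → L} {pa : Fin N → ZMod 2}
    (ha : ∀ i, S.IsHg (pa i) (a i)) (hb : ∀ i, S.IsHg (pa i) (b i))
    (hsk : S.tauT (∑ i, a i ⊗ₜ[ℂ] b i) = -∑ i, a i ⊗ₜ[ℂ] b i)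
    (σ : ZMod 2) (x : L) :
    ∑ i, ∑ j, S.F1 σ (pa i) (pa j) x (a i) (b i) (a j) (b j) = 0 := by
  unfold SuperLie.F1
  simp only [Finset.sum_add_distrib]
  have hcommL : (∑ i : Fin N, ∑ j : Fin N, ((-(sg (pa i) (pa i) * sg σ (pa i) * sg (pa j) (pa i))) • ((S.br (a j) (b i)) ⊗ₜ[ℂ] ((b j) ⊗ₜ[ℂ] (S.br x (a i))))))
      = ∑ i : Fin N, ∑ j : Fin N, ((-(sg (pa j) (pa j) * sg σ (pa j) * sg (pa i) (pa j))) • ((S.br (a i) (b j)) ⊗ₜ[ℂ] ((b i) ⊗ₜ[ℂ] (S.br x (a j))))) := by rw [Finset.sum_comm]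
  rw [hcommL, ← Finset.sum_add_distrib]
  refine Finset.sum_eq_zero fun i _ => ?_
  rw [← Finset.sum_add_distrib]
  have hΦ := skewcancel ha hb hsk (TensorProduct.map (-(S.br (a i) ∘ₗ S.tw σ ∘ₗ S.tw (pa i))) (TensorProduct.mk ℂ L L (b i) ∘ₗ S.br x))
  calc (∑ j, (((-(sg (pa j) (pa j) * sg σ (pa j) * sg (pa i) (pa j))) • ((S.br (a i) (b j)) ⊗ₜ[ℂ] ((b i) ⊗ₜ[ℂ] (S.br x (a j))))) + ((-(sg σ (pa j) * sg (pa i) (pa j))) • ((S.br (a i) (a j)) ⊗ₜ[ℂ] ((b i) ⊗ₜ[ℂ] (S.br x (b j)))))))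
      = ∑ j, ((TensorProduct.map (-(S.br (a i) ∘ₗ S.tw σ ∘ₗ S.tw (pa i))) (TensorProduct.mk ℂ L L (b i) ∘ₗ S.br x)) ((a j) ⊗ₜ[ℂ] (b j))
          + sg (pa j) (pa j) • (TensorProduct.map (-(S.br (a i) ∘ₗ S.tw σ ∘ₗ S.tw (pa i))) (TensorProduct.mk ℂ L L (b i) ∘ₗ S.br x)) ((b j) ⊗ₜ[ℂ] (a j))) := ?_
    _ = 0 := hΦ
  refine Finset.sum_congr rfl fun j _ => ?_
  simp only [LinearMap.smul_apply, LinearMap.neg_apply, LinearMap.comp_apply,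
    TensorProduct.map_tmul, TensorProduct.mk_apply, LinearMap.flip_apply,
    LinearMap.id_apply, LinearEquiv.coe_coe, TensorProduct.comm_tmul,
    tw_hg (ha i), tw_hg (hb i), tw_hg (ha j), tw_hg (hb j), map_smul, map_neg,
    LinearMap.smul_apply, TensorProduct.neg_tmul, TensorProduct.tmul_neg,
    ← TensorProduct.smul_tmul', TensorProduct.tmul_smul, smul_smul]
  rcases zmod2_cases σ with h | h <;> subst h <;>
    rcases zmod2_cases (pa i) with h1 | h1 <;>
    rcases zmod2_cases (pa j) with h2 | h2 <;>
    simp only [h1, h2, zmod_one_one, zero_add, add_zero, sg_zero_left,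
      sg_zero_right, sg_one_one] <;>
    module

lemma sumF3 {S : SuperLie L} {N : ℕ} {a b : Fin N → L} {pa : Fin N → ZMod 2}
    (ha : ∀ i, S.IsHg (pa i) (a i)) (hb : ∀ i, S.IsHg (pa i) (b i))
    (hsk : S.tauT (∑ i, a i ⊗ₜ[ℂ] b i) = -∑ i, a i ⊗ₜ[ℂ] b i)
    (σ : ZMod 2) (x : L) :
    ∑ i, ∑ j, S.F3 σ (pa i) (pa j) x (a i) (b i) (a j) (b j) = 0 := by
  unfold SuperLie.F3
  simp only [Finset.sum_add_distrib]
  have hcommL : (∑ i : Fin N, ∑ j : Fin N, ((sg (pa i) (pa i) * sg σ (pa i) * sg (pa j) (pa i)) • ((a j) ⊗ₜ[ℂ] ((S.br (b i) (b j)) ⊗ₜ[ℂ] (S.br x (a i))))))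
      = ∑ i : Fin N, ∑ j : Fin N, ((sg (pa j) (pa j) * sg σ (pa j) * sg (pa i) (pa j)) • ((a i) ⊗ₜ[ℂ] ((S.br (b j) (b i)) ⊗ₜ[ℂ] (S.br x (a j))))) := by rw [Finset.sum_comm]
  rw [hcommL, ← Finset.sum_add_distrib]
  refine Finset.sum_eq_zero fun i _ => ?_
  rw [← Finset.sum_add_distrib]
  have hΦ := skewcancel ha hb hsk ((TensorProduct.mk ℂ L (L ⊗[ℂ] L) (a i)) ∘ₗ TensorProduct.map ((S.br.flip (b i)) ∘ₗ S.tw σ ∘ₗ S.tw (pa i)) (S.br x))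
  calc (∑ j, (((sg (pa j) (pa j) * sg σ (pa j) * sg (pa i) (pa j)) • ((a i) ⊗ₜ[ℂ] ((S.br (b j) (b i)) ⊗ₜ[ℂ] (S.br x (a j))))) + ((sg σ (pa j) * sg (pa i) (pa j)) • ((a i) ⊗ₜ[ℂ] ((S.br (a j) (b i)) ⊗ₜ[ℂ] (S.br x (b j)))))))
      = ∑ j, (((TensorProduct.mk ℂ L (L ⊗[ℂ] L) (a i)) ∘ₗ TensorProduct.map ((S.br.flip (b i)) ∘ₗ S.tw σ ∘ₗ S.tw (pa i)) (S.br x)) ((a j) ⊗ₜ[ℂ] (b j))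
          + sg (pa j) (pa j) • ((TensorProduct.mk ℂ L (L ⊗[ℂ] L) (a i)) ∘ₗ TensorProduct.map ((S.br.flip (b i)) ∘ₗ S.tw σ ∘ₗ S.tw (pa i)) (S.br x)) ((b j) ⊗ₜ[ℂ] (a j))) := ?_
    _ = 0 := hΦ
  refine Finset.sum_congr rfl fun j _ => ?_
  simp only [LinearMap.smul_apply, LinearMap.neg_apply, LinearMap.comp_apply,
    TensorProduct.map_tmul, TensorProduct.mk_apply, LinearMap.flip_apply,
    LinearMap.id_apply, LinearEquiv.coe_coe, TensorProduct.comm_tmul,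
    tw_hg (ha i), tw_hg (hb i), tw_hg (ha j), tw_hg (hb j), map_smul, map_neg,
    LinearMap.smul_apply, TensorProduct.neg_tmul, TensorProduct.tmul_neg,
    ← TensorProduct.smul_tmul', TensorProduct.tmul_smul, smul_smul]
  rcases zmod2_cases σ with h | h <;> subst h <;>
    rcases zmod2_cases (pa i) with h1 | h1 <;>
    rcases zmod2_cases (pa j) with h2 | h2 <;>
    simp only [h1, h2, zmod_one_one, zero_add, add_zero, sg_zero_left,
      sg_zero_right, sg_one_one] <;>
    module

lemma sumF4 {S : SuperLie L} {N : ℕ} {a b : Fin N → L} {pa : Fin N → ZMod 2}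
    (ha : ∀ i, S.IsHg (pa i) (a i)) (hb : ∀ i, S.IsHg (pa i) (b i))
    (hsk : S.tauT (∑ i, a i ⊗ₜ[ℂ] b i) = -∑ i, a i ⊗ₜ[ℂ] b i)
    (σ : ZMod 2) (x : L) :
    ∑ i, ∑ j, S.F4 σ (pa i) (pa j) x (a i) (b i) (a j) (b j) = 0 := by
  unfold SuperLie.F4
  simp only [Finset.sum_add_distrib]
  have hcommL : (∑ i : Fin N, ∑ j : Fin N, ((sg (pa i) (pa i)) • ((S.br (S.br x (b i)) (a j)) ⊗ₜ[ℂ] ((b j) ⊗ₜ[ℂ] (a i)))))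
      = ∑ i : Fin N, ∑ j : Fin N, ((sg (pa j) (pa j)) • ((S.br (S.br x (b j)) (a i)) ⊗ₜ[ℂ] ((b i) ⊗ₜ[ℂ] (a j)))) := by rw [Finset.sum_comm]
  rw [hcommL, ← Finset.sum_add_distrib]
  refine Finset.sum_eq_zero fun i _ => ?_
  rw [← Finset.sum_add_distrib]
  have hΦ := skewcancel ha hb hsk (TensorProduct.map ((S.br.flip (a i)) ∘ₗ S.br x) (TensorProduct.mk ℂ L L (b i)))
  calc (∑ j, (((sg (pa j) (pa j)) • ((S.br (S.br x (b j)) (a i)) ⊗ₜ[ℂ] ((b i) ⊗ₜ[ℂ] (a j)))) + ((S.br (S.br x (a j)) (a i)) ⊗ₜ[ℂ] ((b i) ⊗ₜ[ℂ] (b j)))))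
      = ∑ j, ((TensorProduct.map ((S.br.flip (a i)) ∘ₗ S.br x) (TensorProduct.mk ℂ L L (b i))) ((a j) ⊗ₜ[ℂ] (b j))
          + sg (pa j) (pa j) • (TensorProduct.map ((S.br.flip (a i)) ∘ₗ S.br x) (TensorProduct.mk ℂ L L (b i))) ((b j) ⊗ₜ[ℂ] (a j))) := ?_
    _ = 0 := hΦ
  refine Finset.sum_congr rfl fun j _ => ?_
  simp only [LinearMap.smul_apply, LinearMap.neg_apply, LinearMap.comp_apply,
    TensorProduct.map_tmul, TensorProduct.mk_apply, LinearMap.flip_apply,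
    LinearMap.id_apply, LinearEquiv.coe_coe, TensorProduct.comm_tmul,
    tw_hg (ha i), tw_hg (hb i), tw_hg (ha j), tw_hg (hb j), map_smul, map_neg,
    LinearMap.smul_apply, TensorProduct.neg_tmul, TensorProduct.tmul_neg,
    ← TensorProduct.smul_tmul', TensorProduct.tmul_smul, smul_smul]
  rcases zmod2_cases σ with h | h <;> subst h <;>
    rcases zmod2_cases (pa i) with h1 | h1 <;>
    rcases zmod2_cases (pa j) with h2 | h2 <;>
    simp only [h1, h2, zmod_one_one, zero_add, add_zero, sg_zero_left,
      sg_zero_right, sg_one_one] <;>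
    module

lemma sumF6 {S : SuperLie L} {N : ℕ} {a b : Fin N → L} {pa : Fin N → ZMod 2}
    (ha : ∀ i, S.IsHg (pa i) (a i)) (hb : ∀ i, S.IsHg (pa i) (b i))
    (hsk : S.tauT (∑ i, a i ⊗ₜ[ℂ] b i) = -∑ i, a i ⊗ₜ[ℂ] b i)
    (σ : ZMod 2) (x : L) :
    ∑ i, ∑ j, S.F6 σ (pa i) (pa j) x (a i) (b i) (a j) (b j) = 0 := by
  unfold SuperLie.F6
  simp only [Finset.sum_add_distrib]
  have hcommL : (∑ i : Fin N, ∑ j : Fin N, ((sg (pa i) (pa i) * sg σ (pa j) * sg (pa i) (pa j)) • ((a j) ⊗ₜ[ℂ] ((S.br (S.br x (b i)) (b j)) ⊗ₜ[ℂ] (a i)))))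
      = ∑ i : Fin N, ∑ j : Fin N, ((sg (pa j) (pa j) * sg σ (pa i) * sg (pa j) (pa i)) • ((a i) ⊗ₜ[ℂ] ((S.br (S.br x (b j)) (b i)) ⊗ₜ[ℂ] (a j)))) := by rw [Finset.sum_comm]
  rw [hcommL, ← Finset.sum_add_distrib]
  refine Finset.sum_eq_zero fun i _ => ?_
  rw [← Finset.sum_add_distrib]
  have hΦ := skewcancel ha hb hsk (sg σ (pa i) • ((TensorProduct.mk ℂ L (L ⊗[ℂ] L) (a i)) ∘ₗ TensorProduct.map ((S.br.flip (b i)) ∘ₗ S.br x ∘ₗ S.tw (pa i)) LinearMap.id))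
  calc (∑ j, (((sg (pa j) (pa j) * sg σ (pa i) * sg (pa j) (pa i)) • ((a i) ⊗ₜ[ℂ] ((S.br (S.br x (b j)) (b i)) ⊗ₜ[ℂ] (a j)))) + ((sg σ (pa i) * sg (pa i) (pa j)) • ((a i) ⊗ₜ[ℂ] ((S.br (S.br x (a j)) (b i)) ⊗ₜ[ℂ] (b j))))))
      = ∑ j, ((sg σ (pa i) • ((TensorProduct.mk ℂ L (L ⊗[ℂ] L) (a i)) ∘ₗ TensorProduct.map ((S.br.flip (b i)) ∘ₗ S.br x ∘ₗ S.tw (pa i)) LinearMap.id)) ((a j) ⊗ₜ[ℂ] (b j))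
          + sg (pa j) (pa j) • (sg σ (pa i) • ((TensorProduct.mk ℂ L (L ⊗[ℂ] L) (a i)) ∘ₗ TensorProduct.map ((S.br.flip (b i)) ∘ₗ S.br x ∘ₗ S.tw (pa i)) LinearMap.id)) ((b j) ⊗ₜ[ℂ] (a j))) := ?_
    _ = 0 := hΦ
  refine Finset.sum_congr rfl fun j _ => ?_
  simp only [LinearMap.smul_apply, LinearMap.neg_apply, LinearMap.comp_apply,
    TensorProduct.map_tmul, TensorProduct.mk_apply, LinearMap.flip_apply,
    LinearMap.id_apply, LinearEquiv.coe_coe, TensorProduct.comm_tmul,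
    tw_hg (ha i), tw_hg (hb i), tw_hg (ha j), tw_hg (hb j), map_smul, map_neg,
    LinearMap.smul_apply, TensorProduct.neg_tmul, TensorProduct.tmul_neg,
    ← TensorProduct.smul_tmul', TensorProduct.tmul_smul, smul_smul]
  rcases zmod2_cases σ with h | h <;> subst h <;>
    rcases zmod2_cases (pa i) with h1 | h1 <;>
    rcases zmod2_cases (pa j) with h2 | h2 <;>
    simp only [h1, h2, zmod_one_one, zero_add, add_zero, sg_zero_left,
      sg_zero_right, sg_one_one] <;>
    module

lemma sumF2 {S : SuperLie L} {N : ℕ} {a b : Fin N → L} {pa : Fin N → ZMod 2}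
    (ha : ∀ i, S.IsHg (pa i) (a i)) (hb : ∀ i, S.IsHg (pa i) (b i))
    (hsk : S.tauT (∑ i, a i ⊗ₜ[ℂ] b i) = -∑ i, a i ⊗ₜ[ℂ] b i)
    (σ : ZMod 2) (x : L) :
    ∑ i, ∑ j, S.F2 σ (pa i) (pa j) x (a i) (b i) (a j) (b j) = 0 := by
  unfold SuperLie.F2
  simp only [Finset.sum_add_distrib]
  have hcommR : (∑ i : Fin N, ∑ j : Fin N, ((-(sg σ (pa i) * sg (pa i) (pa j))) • ((a i) ⊗ₜ[ℂ] ((S.br x (a j)) ⊗ₜ[ℂ] (S.br (b i) (b j))))))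
      = ∑ i : Fin N, ∑ j : Fin N, ((-(sg σ (pa j) * sg (pa j) (pa i))) • ((a j) ⊗ₜ[ℂ] ((S.br x (a i)) ⊗ₜ[ℂ] (S.br (b j) (b i))))) := by rw [Finset.sum_comm]
  rw [hcommR, ← Finset.sum_add_distrib]
  refine Finset.sum_eq_zero fun i _ => ?_
  rw [← Finset.sum_add_distrib]
  have hΦ := skewcancel ha hb hsk (TensorProduct.map (-(S.tw σ ∘ₗ S.tw (pa i))) ((TensorProduct.mk ℂ L L (S.br x (a i))) ∘ₗ S.br.flip (b i)))
  calc (∑ j, (((-(sg (pa j) (pa j) * sg σ (pa j) * sg (pa i) (pa j))) • ((b j) ⊗ₜ[ℂ] ((S.br x (a i)) ⊗ₜ[ℂ] (S.br (a j) (b i))))) + ((-(sg σ (pa j) * sg (pa j) (pa i))) • ((a j) ⊗ₜ[ℂ] ((S.br x (a i)) ⊗ₜ[ℂ] (S.br (b j) (b i)))))))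
      = ∑ j, ((TensorProduct.map (-(S.tw σ ∘ₗ S.tw (pa i))) ((TensorProduct.mk ℂ L L (S.br x (a i))) ∘ₗ S.br.flip (b i))) ((a j) ⊗ₜ[ℂ] (b j))
          + sg (pa j) (pa j) • (TensorProduct.map (-(S.tw σ ∘ₗ S.tw (pa i))) ((TensorProduct.mk ℂ L L (S.br x (a i))) ∘ₗ S.br.flip (b i))) ((b j) ⊗ₜ[ℂ] (a j))) := ?_
    _ = 0 := hΦ
  refine Finset.sum_congr rfl fun j _ => ?_
  simp only [LinearMap.smul_apply, LinearMap.neg_apply, LinearMap.comp_apply,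
    TensorProduct.map_tmul, TensorProduct.mk_apply, LinearMap.flip_apply,
    LinearMap.id_apply, LinearEquiv.coe_coe, TensorProduct.comm_tmul,
    tw_hg (ha i), tw_hg (hb i), tw_hg (ha j), tw_hg (hb j), map_smul, map_neg,
    LinearMap.smul_apply, TensorProduct.neg_tmul, TensorProduct.tmul_neg,
    ← TensorProduct.smul_tmul', TensorProduct.tmul_smul, smul_smul]
  rcases zmod2_cases σ with h | h <;> subst h <;>
    rcases zmod2_cases (pa i) with h1 | h1 <;>
    rcases zmod2_cases (pa j) with h2 | h2 <;>
    simp only [h1, h2, zmod_one_one, zero_add, add_zero, sg_zero_left,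
      sg_zero_right, sg_one_one] <;>
    module

lemma sumF5 {S : SuperLie L} {N : ℕ} {a b : Fin N → L} {pa : Fin N → ZMod 2}
    (ha : ∀ i, S.IsHg (pa i) (a i)) (hb : ∀ i, S.IsHg (pa i) (b i))
    (hsk : S.tauT (∑ i, a i ⊗ₜ[ℂ] b i) = -∑ i, a i ⊗ₜ[ℂ] b i)
    (σ : ZMod 2) (x : L) :
    ∑ i, ∑ j, S.F5 σ (pa i) (pa j) x (a i) (b i) (a j) (b j) = 0 := by
  unfold SuperLie.F5
  simp only [Finset.sum_add_distrib]
  have hcommR : (∑ i : Fin N, ∑ j : Fin N, ((sg σ (pa i) * sg σ (pa j)) • ((a i) ⊗ₜ[ℂ] ((a j) ⊗ₜ[ℂ] (S.br (S.br x (b j)) (b i))))))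
      = ∑ i : Fin N, ∑ j : Fin N, ((sg σ (pa j) * sg σ (pa i)) • ((a j) ⊗ₜ[ℂ] ((a i) ⊗ₜ[ℂ] (S.br (S.br x (b i)) (b j))))) := by rw [Finset.sum_comm]
  rw [hcommR, ← Finset.sum_add_distrib]
  refine Finset.sum_eq_zero fun i _ => ?_
  rw [← Finset.sum_add_distrib]
  have hΦ := skewcancel ha hb hsk (sg σ (pa i) • (TensorProduct.map (S.tw σ) ((TensorProduct.mk ℂ L L (a i)) ∘ₗ (S.br (S.br x (b i))))))
  calc (∑ j, (((sg (pa j) (pa j) * sg σ (pa i) * sg σ (pa j)) • ((b j) ⊗ₜ[ℂ] ((a i) ⊗ₜ[ℂ] (S.br (S.br x (b i)) (a j))))) + ((sg σ (pa j) * sg σ (pa i)) • ((a j) ⊗ₜ[ℂ] ((a i) ⊗ₜ[ℂ] (S.br (S.br x (b i)) (b j)))))))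
      = ∑ j, ((sg σ (pa i) • (TensorProduct.map (S.tw σ) ((TensorProduct.mk ℂ L L (a i)) ∘ₗ (S.br (S.br x (b i)))))) ((a j) ⊗ₜ[ℂ] (b j))
          + sg (pa j) (pa j) • (sg σ (pa i) • (TensorProduct.map (S.tw σ) ((TensorProduct.mk ℂ L L (a i)) ∘ₗ (S.br (S.br x (b i)))))) ((b j) ⊗ₜ[ℂ] (a j))) := ?_
    _ = 0 := hΦ
  refine Finset.sum_congr rfl fun j _ => ?_
  simp only [LinearMap.smul_apply, LinearMap.neg_apply, LinearMap.comp_apply,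
    TensorProduct.map_tmul, TensorProduct.mk_apply, LinearMap.flip_apply,
    LinearMap.id_apply, LinearEquiv.coe_coe, TensorProduct.comm_tmul,
    tw_hg (ha i), tw_hg (hb i), tw_hg (ha j), tw_hg (hb j), map_smul, map_neg,
    LinearMap.smul_apply, TensorProduct.neg_tmul, TensorProduct.tmul_neg,
    ← TensorProduct.smul_tmul', TensorProduct.tmul_smul, smul_smul]
  rcases zmod2_cases σ with h | h <;> subst h <;>
    rcases zmod2_cases (pa i) with h1 | h1 <;>
    rcases zmod2_cases (pa j) with h2 | h2 <;>
    simp only [h1, h2, zmod_one_one, zero_add, add_zero, sg_zero_left,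
      sg_zero_right, sg_one_one] <;>
    module

lemma sumF7 {S : SuperLie L} {N : ℕ} {a b : Fin N → L} {pa : Fin N → ZMod 2}
    (ha : ∀ i, S.IsHg (pa i) (a i)) (hb : ∀ i, S.IsHg (pa i) (b i))
    (hsk : S.tauT (∑ i, a i ⊗ₜ[ℂ] b i) = -∑ i, a i ⊗ₜ[ℂ] b i)
    (σ : ZMod 2) (x : L) :
    ∑ i, ∑ j, S.F7 σ (pa i) (pa j) x (a i) (b i) (a j) (b j) = 0 := by
  unfold SuperLie.F7
  simp only [Finset.sum_add_distrib]
  have stepA : (∑ i : Fin N, ∑ j : Fin N, ((-(sg σ (pa i) * sg σ (pa j) * sg (pa i) (pa j))) • ((S.br (a i) (a j)) ⊗ₜ[ℂ] ((S.br x (b i)) ⊗ₜ[ℂ] (b j)))))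
      = ∑ i : Fin N, ∑ j : Fin N, ((sg (pa j) (pa j) * sg σ (pa i) * sg σ (pa j) * sg (pa i) (pa j)) • ((S.br (a i) (b j)) ⊗ₜ[ℂ] ((S.br x (b i)) ⊗ₜ[ℂ] (a j)))) := by
    refine Finset.sum_congr rfl fun i _ => ?_
    rw [← sub_eq_zero, ← Finset.sum_sub_distrib]
    have hΘ := skewcancel ha hb hsk (sg σ (pa i) • TensorProduct.map (-(S.br (a i) ∘ₗ S.tw σ ∘ₗ S.tw (pa i))) (TensorProduct.mk ℂ L L (S.br x (b i))))
    calc (∑ j, (((-(sg σ (pa i) * sg σ (pa j) * sg (pa i) (pa j))) • ((S.br (a i) (a j)) ⊗ₜ[ℂ] ((S.br x (b i)) ⊗ₜ[ℂ] (b j)))) - ((sg (pa j) (pa j) * sg σ (pa i) * sg σ (pa j) * sg (pa i) (pa j)) • ((S.br (a i) (b j)) ⊗ₜ[ℂ] ((S.br x (b i)) ⊗ₜ[ℂ] (a j))))))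
        = ∑ j, ((sg σ (pa i) • TensorProduct.map (-(S.br (a i) ∘ₗ S.tw σ ∘ₗ S.tw (pa i))) (TensorProduct.mk ℂ L L (S.br x (b i)))) ((a j) ⊗ₜ[ℂ] (b j))
            + sg (pa j) (pa j) • (sg σ (pa i) • TensorProduct.map (-(S.br (a i) ∘ₗ S.tw σ ∘ₗ S.tw (pa i))) (TensorProduct.mk ℂ L L (S.br x (b i)))) ((b j) ⊗ₜ[ℂ] (a j))) := ?_
      _ = 0 := hΘ
    refine Finset.sum_congr rfl fun j _ => ?_
    simp only [LinearMap.smul_apply, LinearMap.neg_apply, LinearMap.comp_apply,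
      TensorProduct.map_tmul, TensorProduct.mk_apply, LinearMap.flip_apply,
      LinearMap.id_apply, LinearEquiv.coe_coe, TensorProduct.comm_tmul,
      tw_hg (ha i), tw_hg (hb i), tw_hg (ha j), tw_hg (hb j), map_smul, map_neg,
      LinearMap.smul_apply, TensorProduct.neg_tmul, TensorProduct.tmul_neg,
      ← TensorProduct.smul_tmul', TensorProduct.tmul_smul, smul_smul]
    rcases zmod2_cases σ with h | h <;> subst h <;>
      rcases zmod2_cases (pa i) with h1 | h1 <;>
      rcases zmod2_cases (pa j) with h2 | h2 <;>
      simp only [h1, h2, zmod_one_one, zero_add, add_zero, sg_zero_left,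
        sg_zero_right, sg_one_one] <;>
      module
  rw [stepA]
  have hcommL : (∑ i : Fin N, ∑ j : Fin N, ((sg (pa i) (pa i) * sg (pa j) (pa j) * sg σ (pa i) * sg σ (pa j) * sg (pa i) (pa j)) • ((S.br (b i) (b j)) ⊗ₜ[ℂ] ((S.br x (a i)) ⊗ₜ[ℂ] (a j)))))
      = ∑ i : Fin N, ∑ j : Fin N, ((sg (pa j) (pa j) * sg (pa i) (pa i) * sg σ (pa j) * sg σ (pa i) * sg (pa j) (pa i)) • ((S.br (b j) (b i)) ⊗ₜ[ℂ] ((S.br x (a j)) ⊗ₜ[ℂ] (a i)))) := by rw [Finset.sum_comm]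
  have hcommM : (∑ i : Fin N, ∑ j : Fin N, ((sg (pa j) (pa j) * sg σ (pa i) * sg σ (pa j) * sg (pa i) (pa j)) • ((S.br (a i) (b j)) ⊗ₜ[ℂ] ((S.br x (b i)) ⊗ₜ[ℂ] (a j)))))
      = ∑ i : Fin N, ∑ j : Fin N, ((sg (pa i) (pa i) * sg σ (pa j) * sg σ (pa i) * sg (pa j) (pa i)) • ((S.br (a j) (b i)) ⊗ₜ[ℂ] ((S.br x (b j)) ⊗ₜ[ℂ] (a i)))) := by rw [Finset.sum_comm]
  rw [hcommL, hcommM, ← Finset.sum_add_distrib]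
  refine Finset.sum_eq_zero fun i _ => ?_
  rw [← Finset.sum_add_distrib]
  have hΛ := skewcancel ha hb hsk ((sg (pa i) (pa i) * sg σ (pa i)) • (TensorProduct.map (S.br.flip (b i)) (((TensorProduct.mk ℂ L L).flip (a i)) ∘ₗ S.br x ∘ₗ S.tw 1 ∘ₗ S.tw σ ∘ₗ S.tw (pa i)) ∘ₗ (TensorProduct.comm ℂ L L).toLinearMap))
  calc (∑ j, (((sg (pa j) (pa j) * sg (pa i) (pa i) * sg σ (pa j) * sg σ (pa i) * sg (pa j) (pa i)) • ((S.br (b j) (b i)) ⊗ₜ[ℂ] ((S.br x (a j)) ⊗ₜ[ℂ] (a i)))) + ((sg (pa i) (pa i) * sg σ (pa j) * sg σ (pa i) * sg (pa j) (pa i)) • ((S.br (a j) (b i)) ⊗ₜ[ℂ] ((S.br x (b j)) ⊗ₜ[ℂ] (a i))))))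
      = ∑ j, (((sg (pa i) (pa i) * sg σ (pa i)) • (TensorProduct.map (S.br.flip (b i)) (((TensorProduct.mk ℂ L L).flip (a i)) ∘ₗ S.br x ∘ₗ S.tw 1 ∘ₗ S.tw σ ∘ₗ S.tw (pa i)) ∘ₗ (TensorProduct.comm ℂ L L).toLinearMap)) ((a j) ⊗ₜ[ℂ] (b j))
          + sg (pa j) (pa j) • ((sg (pa i) (pa i) * sg σ (pa i)) • (TensorProduct.map (S.br.flip (b i)) (((TensorProduct.mk ℂ L L).flip (a i)) ∘ₗ S.br x ∘ₗ S.tw 1 ∘ₗ S.tw σ ∘ₗ S.tw (pa i)) ∘ₗ (TensorProduct.comm ℂ L L).toLinearMap)) ((b j) ⊗ₜ[ℂ] (a j))) := ?_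
    _ = 0 := hΛ
  refine Finset.sum_congr rfl fun j _ => ?_
  simp only [LinearMap.smul_apply, LinearMap.neg_apply, LinearMap.comp_apply,
    TensorProduct.map_tmul, TensorProduct.mk_apply, LinearMap.flip_apply,
    LinearMap.id_apply, LinearEquiv.coe_coe, TensorProduct.comm_tmul,
    tw_hg (ha i), tw_hg (hb i), tw_hg (ha j), tw_hg (hb j), map_smul, map_neg,
    LinearMap.smul_apply, TensorProduct.neg_tmul, TensorProduct.tmul_neg,
    ← TensorProduct.smul_tmul', TensorProduct.tmul_smul, smul_smul]
  rcases zmod2_cases σ with h | h <;> subst h <;>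
    rcases zmod2_cases (pa i) with h1 | h1 <;>
    rcases zmod2_cases (pa j) with h2 | h2 <;>
    simp only [h1, h2, zmod_one_one, zero_add, add_zero, sg_zero_left,
      sg_zero_right, sg_one_one] <;>
    module

lemma sumF8 {S : SuperLie L} {N : ℕ} {a b : Fin N → L} {pa : Fin N → ZMod 2}
    (ha : ∀ i, S.IsHg (pa i) (a i)) (hb : ∀ i, S.IsHg (pa i) (b i))
    (hsk : S.tauT (∑ i, a i ⊗ₜ[ℂ] b i) = -∑ i, a i ⊗ₜ[ℂ] b i)
    (σ : ZMod 2) (x : L) :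
    ∑ i, ∑ j, S.F8 σ (pa i) (pa j) x (a i) (b i) (a j) (b j) = 0 := by
  unfold SuperLie.F8
  simp only [Finset.sum_add_distrib]
  have stepA : (∑ i : Fin N, ∑ j : Fin N, ((-(sg (pa i) (pa j))) • ((S.br (S.br x (a i)) (a j)) ⊗ₜ[ℂ] ((b i) ⊗ₜ[ℂ] (b j)))))
      = ∑ i : Fin N, ∑ j : Fin N, ((sg (pa j) (pa j) * sg (pa i) (pa j)) • ((S.br (S.br x (a i)) (b j)) ⊗ₜ[ℂ] ((b i) ⊗ₜ[ℂ] (a j)))) := by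
    refine Finset.sum_congr rfl fun i _ => ?_
    rw [← sub_eq_zero, ← Finset.sum_sub_distrib]
    have hΘ := skewcancel ha hb hsk (TensorProduct.map (-((S.br (S.br x (a i))) ∘ₗ S.tw (pa i))) (TensorProduct.mk ℂ L L (b i)))
    calc (∑ j, (((-(sg (pa i) (pa j))) • ((S.br (S.br x (a i)) (a j)) ⊗ₜ[ℂ] ((b i) ⊗ₜ[ℂ] (b j)))) - ((sg (pa j) (pa j) * sg (pa i) (pa j)) • ((S.br (S.br x (a i)) (b j)) ⊗ₜ[ℂ] ((b i) ⊗ₜ[ℂ] (a j))))))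
        = ∑ j, ((TensorProduct.map (-((S.br (S.br x (a i))) ∘ₗ S.tw (pa i))) (TensorProduct.mk ℂ L L (b i))) ((a j) ⊗ₜ[ℂ] (b j))
            + sg (pa j) (pa j) • (TensorProduct.map (-((S.br (S.br x (a i))) ∘ₗ S.tw (pa i))) (TensorProduct.mk ℂ L L (b i))) ((b j) ⊗ₜ[ℂ] (a j))) := ?_
      _ = 0 := hΘ
    refine Finset.sum_congr rfl fun j _ => ?_
    simp only [LinearMap.smul_apply, LinearMap.neg_apply, LinearMap.comp_apply,
      TensorProduct.map_tmul, TensorProduct.mk_apply, LinearMap.flip_apply,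
      LinearMap.id_apply, LinearEquiv.coe_coe, TensorProduct.comm_tmul,
      tw_hg (ha i), tw_hg (hb i), tw_hg (ha j), tw_hg (hb j), map_smul, map_neg,
      LinearMap.smul_apply, TensorProduct.neg_tmul, TensorProduct.tmul_neg,
      ← TensorProduct.smul_tmul', TensorProduct.tmul_smul, smul_smul]
    rcases zmod2_cases σ with h | h <;> subst h <;>
      rcases zmod2_cases (pa i) with h1 | h1 <;>
      rcases zmod2_cases (pa j) with h2 | h2 <;>
      simp only [h1, h2, zmod_one_one, zero_add, add_zero, sg_zero_left,
        sg_zero_right, sg_one_one] <;>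
      module
  rw [stepA]
  have hcommL : (∑ i : Fin N, ∑ j : Fin N, ((sg (pa i) (pa i) * sg (pa j) (pa j) * sg (pa i) (pa j)) • ((S.br (S.br x (b i)) (b j)) ⊗ₜ[ℂ] ((a i) ⊗ₜ[ℂ] (a j)))))
      = ∑ i : Fin N, ∑ j : Fin N, ((sg (pa j) (pa j) * sg (pa i) (pa i) * sg (pa j) (pa i)) • ((S.br (S.br x (b j)) (b i)) ⊗ₜ[ℂ] ((a j) ⊗ₜ[ℂ] (a i)))) := by rw [Finset.sum_comm]
  have hcommM : (∑ i : Fin N, ∑ j : Fin N, ((sg (pa j) (pa j) * sg (pa i) (pa j)) • ((S.br (S.br x (a i)) (b j)) ⊗ₜ[ℂ] ((b i) ⊗ₜ[ℂ] (a j)))))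
      = ∑ i : Fin N, ∑ j : Fin N, ((sg (pa i) (pa i) * sg (pa j) (pa i)) • ((S.br (S.br x (a j)) (b i)) ⊗ₜ[ℂ] ((b j) ⊗ₜ[ℂ] (a i)))) := by rw [Finset.sum_comm]
  rw [hcommL, hcommM, ← Finset.sum_add_distrib]
  refine Finset.sum_eq_zero fun i _ => ?_
  rw [← Finset.sum_add_distrib]
  have hΛ := skewcancel ha hb hsk (sg (pa i) (pa i) • (TensorProduct.map ((S.br.flip (b i)) ∘ₗ S.br x ∘ₗ S.tw 1 ∘ₗ S.tw (pa i)) ((TensorProduct.mk ℂ L L).flip (a i)) ∘ₗ (TensorProduct.comm ℂ L L).toLinearMap))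
  calc (∑ j, (((sg (pa j) (pa j) * sg (pa i) (pa i) * sg (pa j) (pa i)) • ((S.br (S.br x (b j)) (b i)) ⊗ₜ[ℂ] ((a j) ⊗ₜ[ℂ] (a i)))) + ((sg (pa i) (pa i) * sg (pa j) (pa i)) • ((S.br (S.br x (a j)) (b i)) ⊗ₜ[ℂ] ((b j) ⊗ₜ[ℂ] (a i))))))
      = ∑ j, ((sg (pa i) (pa i) • (TensorProduct.map ((S.br.flip (b i)) ∘ₗ S.br x ∘ₗ S.tw 1 ∘ₗ S.tw (pa i)) ((TensorProduct.mk ℂ L L).flip (a i)) ∘ₗ (TensorProduct.comm ℂ L L).toLinearMap)) ((a j) ⊗ₜ[ℂ] (b j))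
          + sg (pa j) (pa j) • (sg (pa i) (pa i) • (TensorProduct.map ((S.br.flip (b i)) ∘ₗ S.br x ∘ₗ S.tw 1 ∘ₗ S.tw (pa i)) ((TensorProduct.mk ℂ L L).flip (a i)) ∘ₗ (TensorProduct.comm ℂ L L).toLinearMap)) ((b j) ⊗ₜ[ℂ] (a j))) := ?_
    _ = 0 := hΛ
  refine Finset.sum_congr rfl fun j _ => ?_
  simp only [LinearMap.smul_apply, LinearMap.neg_apply, LinearMap.comp_apply,
    TensorProduct.map_tmul, TensorProduct.mk_apply, LinearMap.flip_apply,
    LinearMap.id_apply, LinearEquiv.coe_coe, TensorProduct.comm_tmul,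
    tw_hg (ha i), tw_hg (hb i), tw_hg (ha j), tw_hg (hb j), map_smul, map_neg,
    LinearMap.smul_apply, TensorProduct.neg_tmul, TensorProduct.tmul_neg,
    ← TensorProduct.smul_tmul', TensorProduct.tmul_smul, smul_smul]
  rcases zmod2_cases σ with h | h <;> subst h <;>
    rcases zmod2_cases (pa i) with h1 | h1 <;>
    rcases zmod2_cases (pa j) with h2 | h2 <;>
    simp only [h1, h2, zmod_one_one, zero_add, add_zero, sg_zero_left,
      sg_zero_right, sg_one_one] <;>
    module

end SumF

-- ===== assembly =====
section Final
variable {S : SuperLie L}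

lemma sg_comm (a b : ZMod 2) : sg a b = sg b a := by
  unfold sg
  exact if_congr and_comm rfl rfl

lemma part1 {N : ℕ} (a b : Fin N → L) (pa : Fin N → ZMod 2)
    (ha : ∀ i, S.IsHg (pa i) (a i)) (hb : ∀ i, S.IsHg (pa i) (b i))
    (hr : (∑ i, a i ⊗ₜ[ℂ] b i) ∈ LinearMap.range (LinearMap.id - S.tauT))
    {σ : ZMod 2} {x : L} (hx : S.IsHg σ x) :
    S.oneXi (TensorProduct.map LinearMap.id (S.Dr a b pa) (S.Dr a b pa x))
      = S.star3 σ x (S.crE a b pa) := by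
  have hsk := hskew hr
  rw [expand_LHS hx a b pa ha hb, expand_RHS hx a b pa ha hb, map_sum]
  have key : ∀ i : Fin N,
      S.oneXi (∑ j, S.FOUR σ (pa i) (pa j) x (a i) (b i) (a j) (b j))
        = (∑ j, S.NINE σ (pa i) (pa j) x (a i) (b i) (a j) (b j))
          + ∑ j, S.SIXTEEN σ (pa i) (pa j) x (a i) (b i) (a j) (b j) := by
    intro i
    rw [map_sum, ← Finset.sum_add_distrib]
    refine Finset.sum_congr rfl fun j _ => ?_
    rw [oneXi_four hx (ha i) (hb i) (ha j) (hb j)]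
    exact GLL hx (ha i) (hb i) (ha j) (hb j)
  simp only [key, Finset.sum_add_distrib]
  have hS : (∑ i, ∑ j, S.SIXTEEN σ (pa i) (pa j) x (a i) (b i) (a j) (b j))
      = 0 := by
    unfold SuperLie.SIXTEEN
    simp only [Finset.sum_add_distrib]
    rw [sumF1 ha hb hsk σ x, sumF2 ha hb hsk σ x, sumF3 ha hb hsk σ x,
      sumF4 ha hb hsk σ x, sumF5 ha hb hsk σ x, sumF6 ha hb hsk σ x,
      sumF7 ha hb hsk σ x, sumF8 ha hb hsk σ x]
    simp
  rw [hS, add_zero]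

lemma Dr_eq_star2 {N : ℕ} {a b : Fin N → L} {pa : Fin N → ZMod 2}
    (ha : ∀ i, S.IsHg (pa i) (a i)) {σ : ZMod 2} {x : L} (hx : S.IsHg σ x) :
    S.Dr a b pa x = S.star2 σ x (∑ i, a i ⊗ₜ[ℂ] b i) := by
  rw [Dr_apply hx, map_sum]
  refine Finset.sum_congr rfl fun i _ => ?_
  rw [star2_tmul_hg x (b i) (ha i), sg_comm]

lemma tau_star2 {σ : ZMod 2} {x : L} (hx : S.IsHg σ x) (t : L ⊗[ℂ] L) :
    S.tauT (S.star2 σ x t) = S.star2 σ x (S.tauT t) := by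
  have key : ∀ (α β : ZMod 2) (u v : L), S.IsHg α u → S.IsHg β v →
      S.tauT (S.star2 σ x (u ⊗ₜ[ℂ] v)) = S.star2 σ x (S.tauT (u ⊗ₜ[ℂ] v)) := by
    intro α β u v hu hv
    rw [star2_tmul_hg x v hu, tauT_tmul hu hv, map_add, map_smul,
      tauT_tmul (hx.brr hu) hv, tauT_tmul hu (hx.brr hv), map_smul,
      star2_tmul_hg x u hv]
    simp only [smul_add, smul_smul]
    rcases zmod2_cases σ with h | h <;> subst h <;>
      rcases zmod2_cases α with h1 | h1 <;> subst h1 <;>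
      rcases zmod2_cases β with h2 | h2 <;> subst h2 <;>
      simp only [zmod_one_one, zero_add, add_zero, sg_zero_left, sg_zero_right,
        sg_one_one] <;>
      module
  induction t with
  | zero => simp
  | tmul u v =>
    obtain ⟨u0, u1, hu0, hu1, rfl⟩ := S.exists_decomp u
    obtain ⟨v0, v1, hv0, hv1, rfl⟩ := S.exists_decomp v
    rw [TensorProduct.add_tmul, TensorProduct.tmul_add, TensorProduct.tmul_add]
    simp only [map_add]
    rw [key 0 0 _ _ hu0 hv0, key 0 1 _ _ hu0 hv1, key 1 0 _ _ hu1 hv0,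
      key 1 1 _ _ hu1 hv1]
  | add s t hs ht => simp only [map_add, hs, ht]

lemma Dr_mem_range {N : ℕ} {a b : Fin N → L} {pa : Fin N → ZMod 2}
    (ha : ∀ i, S.IsHg (pa i) (a i))
    (hr : (∑ i, a i ⊗ₜ[ℂ] b i) ∈ LinearMap.range (LinearMap.id - S.tauT))
    (x : L) :
    S.Dr a b pa x ∈ LinearMap.range (LinearMap.id - S.tauT) := by
  obtain ⟨t, ht⟩ := hr
  have key : ∀ (σ : ZMod 2) (y : L), S.IsHg σ y →
      S.Dr a b pa y ∈ LinearMap.range (LinearMap.id - S.tauT) := by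
    intro σ y hy
    refine ⟨S.star2 σ y t, ?_⟩
    have h1 : (LinearMap.id - S.tauT : L ⊗[ℂ] L →ₗ[ℂ] L ⊗[ℂ] L) (S.star2 σ y t)
        = S.star2 σ y ((LinearMap.id - S.tauT : L ⊗[ℂ] L →ₗ[ℂ] L ⊗[ℂ] L) t) := by
      simp only [LinearMap.sub_apply, LinearMap.id_apply, map_sub, tau_star2 hy]
    rw [h1, ht, ← Dr_eq_star2 ha hy]
  obtain ⟨x0, x1, h0, h1, rfl⟩ := S.exists_decomp x
  rw [map_add]
  exact Submodule.add_mem _ (key 0 x0 h0) (key 1 x1 h1)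

lemma cocycle {N : ℕ} {a b : Fin N → L} {pa : Fin N → ZMod 2}
    (ha : ∀ i, S.IsHg (pa i) (a i)) (hb : ∀ i, S.IsHg (pa i) (b i))
    {σ τ' : ZMod 2} {x y : L} (hx : S.IsHg σ x) (hy : S.IsHg τ' y) :
    S.Dr a b pa (S.br x y)
      = S.star2 σ x (S.Dr a b pa y) - sg σ τ' • S.star2 τ' y (S.Dr a b pa x) := by
  rw [Dr_apply (hx.brr hy) a b pa, Dr_apply hx a b pa, Dr_apply hy a b pa,
    map_sum, map_sum, Finset.smul_sum, ← Finset.sum_sub_distrib]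
  refine Finset.sum_congr rfl fun i _ => ?_
  rw [map_add, map_add, map_smul, map_smul,
    star2_tmul_hg x (b i) (hy.brr (ha i)), star2_tmul_hg x (S.br y (b i)) (ha i),
    star2_tmul_hg y (b i) (hx.brr (ha i)), star2_tmul_hg y (S.br x (b i)) (ha i)]
  have j1 : S.br (S.br x y) (a i)
      = S.br x (S.br y (a i)) - sg σ τ' • S.br y (S.br x (a i)) := by
    rw [S.jacobi σ τ' x y (a i) hx hy]
    abel
  have j2 : S.br (S.br x y) (b i)
      = S.br x (S.br y (b i)) - sg σ τ' • S.br y (S.br x (b i)) := by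
    rw [S.jacobi σ τ' x y (b i) hx hy]
    abel
  rw [j1, j2]
  simp only [TensorProduct.sub_tmul, TensorProduct.tmul_sub, smul_add, smul_sub,
    ← TensorProduct.smul_tmul', TensorProduct.tmul_smul, smul_smul,
    TensorProduct.add_tmul, TensorProduct.tmul_add]
  rcases zmod2_cases σ with h | h <;> subst h <;>
    rcases zmod2_cases τ' with h1 | h1 <;> subst h1 <;>
    rcases zmod2_cases (pa i) with h2 | h2 <;>
    simp only [h2, zmod_one_one, zero_add, add_zero, sg_zero_left, sg_zero_right,
      sg_one_one] <;>
    module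

end Final

/-- for an even `r = Σᵢ aᵢ ⊗ bᵢ ∈ Im(1⊗1−τ)`,
`(1⊗1⊗1 + ξ + ξ²)·(1⊗Δ_r)·Δ_r(x) = x ∗ c(r)` for all (homogeneous) `x ∈ L`;
in particular, `(L, [·,·], Δ_r)` is a Lie superbialgebra iff `r` satisfies the
modified Yang–Baxter equation `x ∗ c(r) = 0` for all `x`. -/
theorem coboundary_eq_MYBE (S : SuperLie L) {N : ℕ} (a b : Fin N → L)
    (pa : Fin N → ZMod 2)
    (ha : ∀ i, S.IsHg (pa i) (a i)) (hb : ∀ i, S.IsHg (pa i) (b i))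
    (hr : (∑ i, a i ⊗ₜ[ℂ] b i) ∈ LinearMap.range (LinearMap.id - S.tauT)) :
    (∀ (σ : ZMod 2) (x : L), S.IsHg σ x →
      S.oneXi (TensorProduct.map LinearMap.id (S.Dr a b pa) (S.Dr a b pa x))
        = S.star3 σ x (S.crE a b pa)) ∧
    (((∀ x : L, S.Dr a b pa x ∈ LinearMap.range (LinearMap.id - S.tauT)) ∧
      (∀ x : L, S.oneXi
          (TensorProduct.map LinearMap.id (S.Dr a b pa) (S.Dr a b pa x)) = 0) ∧
      (∀ (σ τ : ZMod 2) (x y : L), S.IsHg σ x → S.IsHg τ y →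
        S.Dr a b pa (S.br x y)
          = S.star2 σ x (S.Dr a b pa y) - sg σ τ • S.star2 τ y (S.Dr a b pa x)))
      ↔ (∀ (σ : ZMod 2) (x : L), S.IsHg σ x → S.star3 σ x (S.crE a b pa) = 0)) := by
  refine ⟨fun σ x hx => part1 a b pa ha hb hr hx, ?_, ?_⟩
  · rintro ⟨h1, h2, h3⟩ σ x hx
    rw [← part1 a b pa ha hb hr hx]
    exact h2 x
  · intro hmy
    refine ⟨Dr_mem_range ha hr, fun x => ?_,
      fun σ τ x y hx hy => cocycle ha hb hx hy⟩
    obtain ⟨x0, x1, h0, h1, rfl⟩ := S.exists_decomp x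
    simp only [map_add]
    rw [part1 a b pa ha hb hr h0, part1 a b pa ha hb hr h1,
      hmy 0 x0 h0, hmy 1 x1 h1, add_zero]

end SuperLie
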